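/- The oriented Cayley graph on Z/22Z with connection set {+1, +4, −5, +10} (edges x → x+1, x → x+4, x → x−5, x → x+10 for all x) contains no independent set of size 5 and no transitive tournament on 3 vertices. Consequently r(I_5, L_3) > 22. -/

import Mathlib

/-- An oriented graph: no loops, at most one directed edge per pair
(asymmetry implies irreflexivity). -/
def IsOriented {V : Type*} (E : V → V → Prop) : Prop :=
  ∀ x y, E x y → ¬ E y x

/-- The graph contains an independent set of size `m`. -/
def HasIndep {V : Type*} (E : V → V → Prop) (m : ℕ) : Prop :=
  ∃ s : Finset V, s.card = m ∧ ∀ x ∈ s, ∀ y ∈ s, ¬ E x y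

/-- The graph contains a transitive tournament on `n` vertices. -/
def HasTransTour {V : Type*} (E : V → V → Prop) (n : ℕ) : Prop :=
  ∃ f : Fin n ↪ V, ∀ i j : Fin n, i < j → E (f i) (f j)

/-- `r(I_m, L_n)`: the least `k` such that every oriented graph on `k` vertices
contains an independent set of size `m` or a transitive tournament on `n` vertices. -/
noncomputable def ramseyIL (m n : ℕ) : ℕ :=
  sInf {k | ∀ (V : Type) (_ : Fintype V), Fintype.card V = k →
    ∀ E : V → V → Prop, IsOriented E → HasIndep E m ∨ HasTransTour E n}

/-- The oriented Cayley graph on ℤ/22ℤ with connection set {+1, +4, −5, +10}. -/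
def E22 (x y : ZMod 22) : Prop := y - x = 1 ∨ y - x = 4 ∨ y - x = 17 ∨ y - x = 10

instance dE22 (x y : ZMod 22) : Decidable (E22 x y) := by unfold E22; infer_instance

lemma e22_asymm : ∀ x y : ZMod 22, E22 x y → ¬ E22 y x := by decide

lemma key3 : ∀ a b : ZMod 22, E22 a b → ∀ c : ZMod 22, E22 b c → ¬ E22 a c := by decide

set_option synthInstance.maxSize 100000 in
set_option synthInstance.maxHeartbeats 4000000 in
set_option maxHeartbeats 4000000 in
lemma key4 : ∀ b : ZMod 22, ¬E22 0 b → ¬E22 b 0 → b ≠ 0 →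
    ∀ c : ZMod 22, ¬E22 0 c → ¬E22 c 0 → c ≠ 0 → ¬E22 b c → ¬E22 c b → b ≠ c →
    ∀ d : ZMod 22, ¬E22 0 d → ¬E22 d 0 → d ≠ 0 → ¬E22 b d → ¬E22 d b → b ≠ d →
      ¬E22 c d → ¬E22 d c → c ≠ d →
    ∀ e : ZMod 22, ¬E22 0 e → ¬E22 e 0 → e ≠ 0 → ¬E22 b e → ¬E22 e b → b ≠ e →
      ¬E22 c e → ¬E22 e c → c ≠ e → ¬E22 d e → ¬E22 e d → d ≠ e → False := by decide

lemma e22_shift (a x y : ZMod 22) : E22 (x - a) (y - a) ↔ E22 x y := by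
  unfold E22
  rw [sub_sub_sub_cancel_right]

lemma noTT : ¬ ∃ a b c : ZMod 22, E22 a b ∧ E22 b c ∧ E22 a c := by
  rintro ⟨a, b, c, h1, h2, h3⟩
  exact key3 a b h1 c h2 h3

lemma noIndep : ¬ HasIndep E22 5 := by
  rintro ⟨s, hcard, hind⟩
  have h0 : 0 < s.card := by omega
  obtain ⟨a, ha⟩ := Finset.card_pos.mp h0
  set s' : Finset (ZMod 22) := s.image (· - a) with hs'
  have hinj : Function.Injective (fun x : ZMod 22 => x - a) := by
    intro x y h
    simpa using congrArg (· + a) h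
  have hcard' : s'.card = 5 := by
    rw [hs', Finset.card_image_of_injective _ hinj, hcard]
  have hind' : ∀ x ∈ s', ∀ y ∈ s', ¬ E22 x y := by
    intro x hx y hy
    obtain ⟨u, hu, rfl⟩ := Finset.mem_image.mp hx
    obtain ⟨v, hv, rfl⟩ := Finset.mem_image.mp hy
    simpa [e22_shift] using hind u hu v hv
  have h0' : (0 : ZMod 22) ∈ s' := Finset.mem_image.mpr ⟨a, ha, sub_self a⟩
  set t := s'.erase 0 with ht
  have htc : t.card = 3 + 1 := by
    rw [ht, Finset.card_erase_of_mem h0', hcard']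
  obtain ⟨b, t1, hbt1, hins, ht1c⟩ := Finset.card_eq_succ.mp htc
  obtain ⟨c, d, e, hcd, hce, hde, rfl⟩ := Finset.card_eq_three.mp ht1c
  have hmem : ∀ x, x ∈ t → x ∈ s' ∧ x ≠ 0 := by
    intro x hx
    exact ⟨Finset.mem_of_mem_erase (ht ▸ hx), Finset.ne_of_mem_erase (ht ▸ hx)⟩
  have hb : b ∈ t := hins ▸ Finset.mem_insert_self b _
  have hc : c ∈ t := hins ▸ Finset.mem_insert_of_mem (by simp)
  have hd : d ∈ t := hins ▸ Finset.mem_insert_of_mem (by simp)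
  have he : e ∈ t := hins ▸ Finset.mem_insert_of_mem (by simp)
  have hbc : b ≠ c := fun h => hbt1 (h ▸ (by simp : c ∈ ({c, d, e} : Finset (ZMod 22))))
  have hbd : b ≠ d := fun h => hbt1 (h ▸ (by simp : d ∈ ({c, d, e} : Finset (ZMod 22))))
  have hbe : b ≠ e := fun h => hbt1 (h ▸ (by simp : e ∈ ({c, d, e} : Finset (ZMod 22))))
  obtain ⟨hbs, hb0⟩ := hmem b hb
  obtain ⟨hcs, hc0⟩ := hmem c hc
  obtain ⟨hds, hd0⟩ := hmem d hd
  obtain ⟨hes, he0⟩ := hmem e he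
  exact key4 b (hind' 0 h0' b hbs) (hind' b hbs 0 h0') hb0
    c (hind' 0 h0' c hcs) (hind' c hcs 0 h0') hc0 (hind' b hbs c hcs) (hind' c hcs b hbs) hbc
    d (hind' 0 h0' d hds) (hind' d hds 0 h0') hd0 (hind' b hbs d hds) (hind' d hds b hbs) hbd
      (hind' c hcs d hds) (hind' d hds c hcs) hcd
    e (hind' 0 h0' e hes) (hind' e hes 0 h0') he0 (hind' b hbs e hes) (hind' e hes b hbs) hbe
      (hind' c hcs e hes) (hind' e hes c hcs) hce (hind' d hds e hes) (hind' e hes d hds) hde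

/-- In a finite oriented graph with no transitive triangle, any vertex set of size
at least `m*m` contains an independent set of size `m`. -/
lemma keyLemma {V : Type} [DecidableEq V] (E : V → V → Prop)
    (hT : ¬ ∃ a b c : V, E a b ∧ E b c ∧ E a c) :
    ∀ m : ℕ, ∀ s : Finset V, m * m ≤ s.card →
      ∃ t, t ⊆ s ∧ t.card = m ∧ ∀ x ∈ t, ∀ y ∈ t, ¬ E x y := by
  intro m
  induction m with
  | zero => exact fun s _ => ⟨∅, Finset.empty_subset s, rfl, by simp⟩
  | succ m ih =>
    intro s hs
    classical
    have hpos : 0 < s.card :=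
      lt_of_lt_of_le (Nat.mul_pos (Nat.succ_pos m) (Nat.succ_pos m)) hs
    obtain ⟨v, hv⟩ := Finset.card_pos.mp hpos
    by_cases hA : m + 1 ≤ (s.filter (fun x => E v x)).card
    · obtain ⟨t, hts, htc⟩ := Finset.exists_subset_card_eq hA
      refine ⟨t, hts.trans (Finset.filter_subset _ _), htc, ?_⟩
      intro x hx y hy hxy
      exact hT ⟨v, x, y, (Finset.mem_filter.mp (hts hx)).2, hxy,
        (Finset.mem_filter.mp (hts hy)).2⟩
    · by_cases hB : m + 1 ≤ (s.filter (fun x => E x v)).card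
      · obtain ⟨t, hts, htc⟩ := Finset.exists_subset_card_eq hB
        refine ⟨t, hts.trans (Finset.filter_subset _ _), htc, ?_⟩
        intro x hx y hy hxy
        exact hT ⟨x, y, v, hxy, (Finset.mem_filter.mp (hts hy)).2,
          (Finset.mem_filter.mp (hts hx)).2⟩
      · set s'' := (s.erase v).filter (fun x => ¬ E v x ∧ ¬ E x v) with hs''
        have hsub : (s.erase v).filter (fun x => ¬(¬ E v x ∧ ¬ E x v)) ⊆
            s.filter (fun x => E v x) ∪ s.filter (fun x => E x v) := by
          intro x hx
          rcases Finset.mem_filter.mp hx with ⟨hx1, hx2⟩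
          have hxs := Finset.mem_of_mem_erase hx1
          simp only [Finset.mem_union, Finset.mem_filter]
          tauto
        have hcs : m * m ≤ s''.card := by
          have h1 : s''.card +
              ((s.erase v).filter (fun x => ¬(¬ E v x ∧ ¬ E x v))).card =
              (s.erase v).card := by
            rw [hs'']
            exact Finset.card_filter_add_card_filter_not _
          have h2 := Finset.card_le_card hsub
          have h3 := Finset.card_union_le (s.filter (fun x => E v x))
            (s.filter (fun x => E x v))
          have h4 := Finset.card_erase_of_mem hv
          have h5 : (m + 1) * (m + 1) = m * m + 2 * m + 1 := by ring
          omega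
        obtain ⟨t, hts, htc, hind⟩ := ih s'' hcs
        have hvt : v ∉ t := by
          intro h
          exact (Finset.mem_erase.mp (Finset.mem_of_mem_filter _ (hts h))).1 rfl
        refine ⟨insert v t, ?_, ?_, ?_⟩
        · intro x hx
          rcases Finset.mem_insert.mp hx with rfl | hx
          · exact hv
          · exact Finset.mem_of_mem_erase (Finset.mem_of_mem_filter _ (hts hx))
        · rw [Finset.card_insert_of_notMem hvt, htc]
        · intro x hx y hy
          rcases Finset.mem_insert.mp hx with rfl | hx' <;>
            rcases Finset.mem_insert.mp hy with rfl | hy'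
          · intro h; exact hT ⟨_, _, _, h, h, h⟩
          · exact ((Finset.mem_filter.mp (hts hy')).2).1
          · exact ((Finset.mem_filter.mp (hts hx')).2).2
          · exact hind x hx' y hy'

lemma mem25 : ∀ (V : Type) (_ : Fintype V), Fintype.card V = 25 →
    ∀ E : V → V → Prop, IsOriented E → HasIndep E 5 ∨ HasTransTour E 3 := by
  intro V _ hcard E hO
  classical
  by_cases h : ∃ a b c : V, E a b ∧ E b c ∧ E a c
  · right
    obtain ⟨a, b, c, hab, hbc, hac⟩ := h
    have hirr : ∀ x : V, ¬ E x x := fun x hx => hO x x hx hx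
    have hab' : a ≠ b := fun h => hirr b (h ▸ hab)
    have hbc' : b ≠ c := fun h => hirr c (h ▸ hbc)
    have hac' : a ≠ c := fun h => hirr c (h ▸ hac)
    refine ⟨⟨![a, b, c], ?_⟩, ?_⟩
    · intro i j hij
      fin_cases i <;> fin_cases j <;> simp_all
    · intro i j hij
      fin_cases i <;> fin_cases j <;>
        simp_all [Matrix.cons_val_zero, Matrix.cons_val_one, Matrix.head_cons] <;>
        first
          | exact hab
          | exact hbc
          | exact hac
          | exact absurd hij (by decide)
  · left
    obtain ⟨t, _, htc, hind⟩ := keyLemma E h 5 Finset.univ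
      (by rw [Finset.card_univ, hcard])
    exact ⟨t, htc, hind⟩

theorem stmt14 :
    (¬ HasIndep E22 5 ∧
      ¬ ∃ a b c : ZMod 22, E22 a b ∧ E22 b c ∧ E22 a c) ∧
    22 < ramseyIL 5 3 := by
  refine ⟨⟨noIndep, noTT⟩, ?_⟩
  have hne : ({k | ∀ (V : Type) (_ : Fintype V), Fintype.card V = k →
      ∀ E : V → V → Prop, IsOriented E → HasIndep E 5 ∨ HasTransTour E 3} : Set ℕ).Nonempty :=
    ⟨25, mem25⟩
  have hmem := Nat.sInf_mem hne
  rw [show ramseyIL 5 3 = sInf {k | ∀ (V : Type) (_ : Fintype V), Fintype.card V = k →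
      ∀ E : V → V → Prop, IsOriented E → HasIndep E 5 ∨ HasTransTour E 3} from rfl]
  by_contra hle
  push_neg at hle
  set k := sInf {k | ∀ (V : Type) (_ : Fintype V), Fintype.card V = k →
      ∀ E : V → V → Prop, IsOriented E → HasIndep E 5 ∨ HasTransTour E 3} with hk
  -- hle : k ≤ 22
  have hemb : Function.Injective (fun i : Fin k => ((i : ℕ) : ZMod 22)) := by
    intro i j h
    have hi : (i : ℕ) < 22 := lt_of_lt_of_le i.isLt hle
    have hj : (j : ℕ) < 22 := lt_of_lt_of_le j.isLt hle
    have := congrArg ZMod.val h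
    rw [ZMod.val_natCast_of_lt hi, ZMod.val_natCast_of_lt hj] at this
    exact Fin.ext this
  set emb : Fin k → ZMod 22 := fun i => ((i : ℕ) : ZMod 22) with hembdef
  have hO' : IsOriented (fun i j : Fin k => E22 (emb i) (emb j)) :=
    fun x y h h' => e22_asymm _ _ h h'
  rcases hmem (Fin k) inferInstance (Fintype.card_fin k) _ hO' with hI | hT
  · obtain ⟨s, hc, hi⟩ := hI
    refine noIndep ⟨s.image emb, ?_, ?_⟩
    · rw [Finset.card_image_of_injective _ hemb, hc]
    · intro x hx y hy
      obtain ⟨u, hu, rfl⟩ := Finset.mem_image.mp hx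
      obtain ⟨w, hw, rfl⟩ := Finset.mem_image.mp hy
      exact hi u hu w hw
  · obtain ⟨f, hf⟩ := hT
    exact noTT ⟨emb (f 0), emb (f 1), emb (f 2),
      hf 0 1 (by decide), hf 1 2 (by decide), hf 0 2 (by decide)⟩
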